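/- For β ≥ 1 and ε ∈ [0,1], every orbit of the coupled Gauss map lattice starting in [β, β+1]^N converges to the homogeneous fixed state (x*, ..., x*), where x* is the unique fixed point of f(x) = exp(-7.5 x²) + β. -/
import Mathlib

lemma gauss_lip : ∀ a b : ℝ, 1 ≤ a → 1 ≤ b →
    |Real.exp (-7.5 * a ^ 2) - Real.exp (-7.5 * b ^ 2)| ≤ (15 * Real.exp (-7.5)) * |a - b| := by
  have key : ∀ x ∈ Set.Ici (1:ℝ),
      ‖Real.exp (-7.5 * x ^ 2) * (-7.5 * (2 * x ^ 1))‖ ≤ 15 * Real.exp (-7.5) := by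
    intro x hx
    simp only [Set.mem_Ici] at hx
    have h1 : (7.5 * x ^ 2 - 7.5) + 1 ≤ Real.exp (7.5 * x ^ 2 - 7.5) := Real.add_one_le_exp _
    have h2 : x ≤ 7.5 * x ^ 2 - 6.5 := by nlinarith [(x - 1) * (7.5 * x + 6.5)]
    have h3 : Real.exp (7.5 * x ^ 2 - 7.5) * Real.exp (-7.5 * x ^ 2) = Real.exp (-7.5) := by
      rw [← Real.exp_add]; ring_nf
    have hpos : 0 < Real.exp (-7.5 * x ^ 2) := Real.exp_pos _
    have hval : Real.exp (-7.5 * x ^ 2) * (-7.5 * (2 * x ^ 1))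
        = -(15 * x * Real.exp (-7.5 * x ^ 2)) := by ring
    rw [hval, norm_neg, Real.norm_eq_abs, abs_of_nonneg (by positivity)]
    nlinarith [Real.exp_pos (7.5 * x ^ 2 - 7.5)]
  intro a b ha hb
  have hconv : Convex ℝ (Set.Ici (1:ℝ)) := convex_Ici 1
  have hderiv : ∀ x ∈ Set.Ici (1:ℝ),
      HasDerivWithinAt (fun y : ℝ => Real.exp (-7.5 * y ^ 2))
        (Real.exp (-7.5 * x ^ 2) * (-7.5 * (2 * x ^ 1))) (Set.Ici 1) x := by
    intro x _
    exact (((hasDerivAt_pow 2 x).const_mul (-7.5)).exp).hasDerivWithinAt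
  have := hconv.norm_image_sub_le_of_norm_hasDerivWithin_le hderiv key
    (Set.mem_Ici.mpr hb) (Set.mem_Ici.mpr ha)
  simpa [Real.norm_eq_abs] using this

/-- For β ≥ 1 and ε ∈ [0,1], every orbit of the coupled Gauss map lattice starting
in [β, β+1]^N converges to the homogeneous state at the unique fixed point of f. -/
theorem cml_gauss_converges (N : ℕ) [NeZero N] (β ε : ℝ) (hβ : 1 ≤ β)
    (hε : ε ∈ Set.Icc (0 : ℝ) 1) (xs : ℝ)
    (hfix : Real.exp (-7.5 * xs ^ 2) + β = xs)
    (Φ : (Fin N → ℝ) → (Fin N → ℝ))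
    (hΦ : ∀ x i, Φ x i =
        (1 - ε) * (Real.exp (-7.5 * (x i) ^ 2) + β)
          + (ε / 2) * ((Real.exp (-7.5 * (x (i + 1)) ^ 2) + β)
            + (Real.exp (-7.5 * (x (i - 1)) ^ 2) + β)))
    (x₀ : Fin N → ℝ) (hx₀ : ∀ i, x₀ i ∈ Set.Icc β (β + 1)) :
    Filter.Tendsto (fun n => Φ^[n] x₀) Filter.atTop (nhds (fun _ => xs)) := by
  obtain ⟨hε0, hε1⟩ := hε
  set q : ℝ := 15 * Real.exp (-7.5) with hq
  have hq0 : 0 ≤ q := by positivity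
  have hq1 : q < 1 := by
    have h1 : (4.75 : ℝ) ≤ Real.exp 3.75 := by
      have := Real.add_one_le_exp (3.75 : ℝ); linarith
    have h2 : Real.exp (7.5 : ℝ) = Real.exp 3.75 * Real.exp 3.75 := by
      rw [← Real.exp_add]; norm_num
    have h3 : Real.exp (-7.5 : ℝ) * Real.exp (7.5 : ℝ) = 1 := by
      rw [← Real.exp_add]; norm_num
    have h4 : (15 : ℝ) < Real.exp 7.5 := by nlinarith
    have h5 : 0 < Real.exp (-7.5 : ℝ) := Real.exp_pos _
    rw [hq]; nlinarith
  have hmaps : ∀ y : ℝ, Real.exp (-7.5 * y ^ 2) + β ∈ Set.Icc β (β + 1) := by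
    intro y
    have h1 : 0 < Real.exp (-7.5 * y ^ 2) := Real.exp_pos _
    have h2 : Real.exp (-7.5 * y ^ 2) ≤ 1 :=
      Real.exp_le_one_iff.mpr (by nlinarith [sq_nonneg y])
    rw [Set.mem_Icc]
    constructor <;> linarith
  have hxs : xs ∈ Set.Icc β (β + 1) := hfix ▸ hmaps xs
  have hxs1 : 1 ≤ xs := le_trans hβ hxs.1
  have main : ∀ n, (∀ i, Φ^[n] x₀ i ∈ Set.Icc β (β + 1)) ∧
      (∀ i, |Φ^[n] x₀ i - xs| ≤ q ^ n) := by
    intro n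
    induction n with
    | zero =>
      refine ⟨by simpa using hx₀, fun i => ?_⟩
      simp only [Function.iterate_zero, id_eq, pow_zero]
      obtain ⟨l, u⟩ := hx₀ i
      rw [abs_le]
      constructor
      · linarith [hxs.2]
      · linarith [hxs.1]
    | succ n ih =>
      obtain ⟨ihm, ihd⟩ := ih
      set x := Φ^[n] x₀ with hx
      have hstep : Φ^[n+1] x₀ = Φ x := by rw [Function.iterate_succ_apply']
      have hqn : (0:ℝ) ≤ q ^ n := pow_nonneg hq0 n
      refine ⟨fun i => ?_, fun i => ?_⟩
      · rw [hstep, hΦ]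
        obtain ⟨A1, A2⟩ := hmaps (x i)
        obtain ⟨B1, B2⟩ := hmaps (x (i+1))
        obtain ⟨C1, C2⟩ := hmaps (x (i-1))
        constructor
        · simp only [Set.mem_Icc] at *
          nlinarith
        · simp only [Set.mem_Icc] at *
          nlinarith
      · rw [hstep, hΦ]
        have h1 : 1 ≤ x i := le_trans hβ (ihm i).1
        have h2 : 1 ≤ x (i+1) := le_trans hβ (ihm (i+1)).1
        have h3 : 1 ≤ x (i-1) := le_trans hβ (ihm (i-1)).1
        set E1 := Real.exp (-7.5 * (x i) ^ 2)
        set E2 := Real.exp (-7.5 * (x (i+1)) ^ 2)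
        set E3 := Real.exp (-7.5 * (x (i-1)) ^ 2)
        set Es := Real.exp (-7.5 * xs ^ 2)
        have b1 : |E1 - Es| ≤ q * q ^ n :=
          le_trans (gauss_lip _ _ h1 hxs1) (mul_le_mul_of_nonneg_left (ihd i) hq0)
        have b2 : |E2 - Es| ≤ q * q ^ n :=
          le_trans (gauss_lip _ _ h2 hxs1) (mul_le_mul_of_nonneg_left (ihd (i+1)) hq0)
        have b3 : |E3 - Es| ≤ q * q ^ n :=
          le_trans (gauss_lip _ _ h3 hxs1) (mul_le_mul_of_nonneg_left (ihd (i-1)) hq0)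
        have heq : (1 - ε) * (E1 + β) + (ε / 2) * ((E2 + β) + (E3 + β)) - xs
            = (1 - ε) * (E1 - Es) + (ε / 2) * ((E2 - Es) + (E3 - Es)) := by
          rw [← hfix]; ring
        rw [heq]
        calc |(1 - ε) * (E1 - Es) + (ε / 2) * ((E2 - Es) + (E3 - Es))|
            ≤ |(1 - ε) * (E1 - Es)| + |(ε / 2) * ((E2 - Es) + (E3 - Es))| := abs_add_le _ _
          _ = (1 - ε) * |E1 - Es| + (ε / 2) * |(E2 - Es) + (E3 - Es)| := by
              rw [abs_mul, abs_mul, abs_of_nonneg (by linarith : (0:ℝ) ≤ 1 - ε),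
                abs_of_nonneg (by linarith : (0:ℝ) ≤ ε / 2)]
          _ ≤ (1 - ε) * (q * q ^ n) + (ε / 2) * ((q * q ^ n) + (q * q ^ n)) := by
              gcongr <;>
                first
                  | linarith
                  | exact le_trans (abs_add_le _ _) (add_le_add b2 b3)
          _ = q ^ (n + 1) := by rw [pow_succ]; ring
  rw [tendsto_pi_nhds]
  intro i
  rw [tendsto_iff_dist_tendsto_zero]
  have hlim : Filter.Tendsto (fun n => q ^ n) Filter.atTop (nhds 0) :=
    tendsto_pow_atTop_nhds_zero_of_lt_one hq0 hq1
  refine squeeze_zero (fun n => dist_nonneg) (fun n => ?_) hlim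
  rw [Real.dist_eq]
  exact (main n).2 i
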